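/- Let B be a unital C*-algebra and A ⊆ B a unital *-subalgebra such that for every n ≥ 1: (i) every matrix x ∈ M_n(A) that is invertible in M_n(B) has its inverse in M_n(A), and (ii) every matrix x ∈ M_n(A) that is a positive invertible element of the C*-algebra M_n(B) has its positive square root in M_n(A). Then every finitely generated projective right A-module E is isomorphic, as a right A-module, to pA^q for some q ≥ 1 and some self-adjoint idempotent p ∈ M_q(A) (p² = p = p*). -/

import Mathlib

/-- The right `A`-module `p A^q` (the image of the action of the matrix `p` on column
vectors), as a submodule of `A^q` viewed as a right `A`-module (i.e. an `Aᵐᵒᵖ`-module). -/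
def Matrix.rangeSubmodule {A : Type*} [Ring A] {q : ℕ} (p : Matrix (Fin q) (Fin q) A) :
    Submodule Aᵐᵒᵖ (Fin q → A) where
  carrier := Set.range p.mulVec
  add_mem' := by rintro _ _ ⟨x, rfl⟩ ⟨y, rfl⟩; exact ⟨x + y, Matrix.mulVec_add p x y⟩
  zero_mem' := ⟨0, by simp⟩
  smul_mem' := by rintro c _ ⟨x, rfl⟩; exact ⟨c • x, Matrix.mulVec_smul p c x⟩


open Finset in
private lemma isUnit_of_quadform {B : Type*} [CStarAlgebra B] [PartialOrder B]
    [StarOrderedRing B] :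
    ∀ (n : Type) [Fintype n] [DecidableEq n] (z : Matrix n n B),
      (∀ v : n → B, ∑ i, star (v i) * v i ≤ ∑ i, ∑ j, star (v i) * z i j * v j) →
      IsUnit z := by
  intro n _ _ z hz
  revert z
  have key := Fintype.induction_empty_option
    (P := fun (α : Type) (_ : Fintype α) =>
      ∀ (_ : DecidableEq α) (z : Matrix α α B),
        (∀ v : α → B, ∑ i, star (v i) * v i ≤ ∑ i, ∑ j, star (v i) * z i j * v j) →
        IsUnit z)
    ?_ ?_ ?_ n
  · intro z hz; exact key _ z hz
  · -- equiv case
    intro α β _ e hα _ z hz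
    letI : Fintype α := Fintype.ofEquiv β e.symm
    letI : DecidableEq α := Classical.decEq α
    have hz' : ∀ v : α → B, ∑ i, star (v i) * v i ≤
        ∑ i, ∑ j, star (v i) * (z.submatrix e e) i j * v j := by
      intro v
      have h := hz (fun b => v (e.symm b))
      calc ∑ i, star (v i) * v i
          = ∑ b, star (v (e.symm b)) * v (e.symm b) :=
            Fintype.sum_equiv e _ _ (fun i => by simp)
        _ ≤ ∑ b, ∑ b', star (v (e.symm b)) * z b b' * v (e.symm b') := h
        _ = ∑ i, ∑ j, star (v i) * (z.submatrix e e) i j * v j := by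
            refine (Fintype.sum_equiv e _ _ (fun i => ?_)).symm
            refine Fintype.sum_equiv e _ _ (fun j => ?_)
            simp
    have hu : IsUnit (z.submatrix e e) := hα _ _ hz'
    have : z = (Matrix.reindexAlgEquiv ℕ B e) (z.submatrix e e) := by
      ext i j; simp
    rw [this]
    exact hu.map _
  · -- empty case
    intro _ z _
    haveI : Subsingleton (Matrix PEmpty PEmpty B) :=
      ⟨fun a b => by ext i j; exact i.elim⟩
    exact isUnit_of_subsingleton z
  · -- option case
    intro α _ hα _ z hz
    letI : DecidableEq α := Classical.decEq α
    -- the (none,none) entry dominates 1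
    set d := z none none with hd_def
    have hd1 : (1 : B) ≤ d := by
      have h := hz (fun o => o.elim 1 fun _ => 0)
      simpa [Fintype.sum_option] using h
    have hdu : IsUnit d := CStarAlgebra.isUnit_of_le 1 hd1
    set g : B := ↑hdu.unit⁻¹ with hg_def
    have hgd : g * d = 1 := hdu.val_inv_mul
    have hdg : d * g = 1 := hdu.mul_val_inv
    have hds : star d = d := (IsSelfAdjoint.of_nonneg (zero_le_one.trans hd1)).star_eq
    have hgs : star g = g := by
      have h1 : star g * d = 1 := by
        rw [← hds, ← star_mul, hdg, star_one]
      calc star g = star g * (d * g) := by rw [hdg, mul_one]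
        _ = star g * d * g := by rw [mul_assoc]
        _ = g := by rw [h1, one_mul]
    -- Schur complement
    set s : Matrix α α B := Matrix.of fun i j =>
      z (some i) (some j) - z (some i) none * (g * z none (some j)) with hs_def
    have hsQ : ∀ u : α → B, ∑ i, star (u i) * u i ≤ ∑ i, ∑ j, star (u i) * s i j * u j := by
      intro u
      set m := ∑ j, z none (some j) * u j with hm_def
      set nn := ∑ i, star (u i) * z (some i) none with hn_def
      set a : B := -(g * m) with ha_def
      have hsa : star a = -(star m * g) := by
        rw [ha_def, star_neg, star_mul, hgs]
      have h := hz (fun o => o.elim a u)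
      simp only [Fintype.sum_option, Option.elim_none, Option.elim_some] at h
      -- rewrite the four pieces
      have t1 : star a * z none none * a = star m * (g * m) := by
        rw [hsa, ha_def, ← hd_def, neg_mul, neg_mul_neg, mul_assoc (star m) g d, hgd,
          mul_one]
      have t2 : ∑ j, star a * z none (some j) * u j = -(star m * (g * m)) := by
        have : ∀ j : α, star a * z none (some j) * u j
            = star a * (z none (some j) * u j) := fun j => by rw [mul_assoc]
        rw [Finset.sum_congr rfl fun j _ => this j, ← Finset.mul_sum, ← hm_def, hsa,
          neg_mul, mul_assoc]
      have t3 : ∑ i, star (u i) * z (some i) none * a = -(nn * (g * m)) := by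
        rw [← Finset.sum_mul, ← hn_def, ha_def, mul_neg]
      have t4 : ∑ i, ∑ j, star (u i) * s i j * u j
          = (∑ i, ∑ j, star (u i) * z (some i) (some j) * u j) - nn * (g * m) := by
        have expand : ∀ i j, star (u i) * s i j * u j
            = star (u i) * z (some i) (some j) * u j
              - star (u i) * z (some i) none * (g * (z none (some j) * u j)) := by
          intro i j
          rw [hs_def]
          simp only [Matrix.of_apply]
          rw [mul_sub, sub_mul]
          congr 1
          rw [mul_assoc, mul_assoc, mul_assoc, mul_assoc]
        simp only [expand, Finset.sum_sub_distrib]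
        congr 1
        calc ∑ i, ∑ j, star (u i) * z (some i) none * (g * (z none (some j) * u j))
            = ∑ i, star (u i) * z (some i) none * (g * m) := by
              refine Finset.sum_congr rfl fun i _ => ?_
              rw [← Finset.mul_sum, ← Finset.mul_sum, ← hm_def]
          _ = nn * (g * m) := by rw [← Finset.sum_mul, ← hn_def]
      rw [t4]
      have hle : ∑ i, star (u i) * u i ≤ star a * a + ∑ i, star (u i) * u i :=
        le_add_of_nonneg_left (star_mul_self_nonneg a)
      refine hle.trans (h.trans_eq ?_)
      rw [t1, t2, Finset.sum_add_distrib, t3]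
      abel
    have hsu : IsUnit s := hα _ s hsQ
    set t : Matrix α α B := hsu.unit⁻¹.val with ht_def
    have hst : s * t = 1 := hsu.mul_val_inv
    have hts : t * s = 1 := hsu.val_inv_mul
    -- the factorization z = (1 + C) * M * (1 + D)
    set C : Matrix (Option α) (Option α) B := Matrix.of fun i j =>
      j.elim (i.elim 0 fun i' => z (some i') none * g) fun _ => 0 with hC_def
    set D : Matrix (Option α) (Option α) B := Matrix.of fun i j =>
      i.elim (j.elim 0 fun j' => g * z none (some j')) fun _ => 0 with hD_def
    set M : Matrix (Option α) (Option α) B := Matrix.of fun i j =>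
      i.elim (j.elim d fun _ => 0) fun i' => j.elim 0 fun j' => s i' j' with hM_def
    set M' : Matrix (Option α) (Option α) B := Matrix.of fun i j =>
      i.elim (j.elim g fun _ => 0) fun i' => j.elim 0 fun j' => t i' j' with hM'_def
    have hdgx : ∀ x : B, d * (g * x) = x := fun x => by rw [← mul_assoc, hdg, one_mul]
    have hgdx : ∀ x : B, g * (d * x) = x := fun x => by rw [← mul_assoc, hgd, one_mul]
    have hC2 : C * C = 0 := by
      ext i j
      rw [Matrix.mul_apply]
      cases i <;> cases j <;> simp [hC_def, Fintype.sum_option]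
    have hD2 : D * D = 0 := by
      ext i j
      rw [Matrix.mul_apply]
      cases i <;> cases j <;> simp [hD_def, Fintype.sum_option]
    have hCu : IsUnit (1 + C) := by
      refine ⟨⟨1 + C, 1 - C, ?_, ?_⟩, rfl⟩
      · have : (1 + C) * (1 - C) = 1 - C * C := by noncomm_ring
        rw [this, hC2, sub_zero]
      · have : (1 - C) * (1 + C) = 1 - C * C := by noncomm_ring
        rw [this, hC2, sub_zero]
    have hDu : IsUnit (1 + D) := by
      refine ⟨⟨1 + D, 1 - D, ?_, ?_⟩, rfl⟩
      · have : (1 + D) * (1 - D) = 1 - D * D := by noncomm_ring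
        rw [this, hD2, sub_zero]
      · have : (1 - D) * (1 + D) = 1 - D * D := by noncomm_ring
        rw [this, hD2, sub_zero]
    have hMu : IsUnit M := by
      refine ⟨⟨M, M', ?_, ?_⟩, rfl⟩
      · ext i j
        rw [Matrix.mul_apply]
        cases i <;> cases j <;>
          simp [hM_def, hM'_def, Fintype.sum_option, Matrix.one_apply, hdg,
            ← Matrix.mul_apply, hst]
      · ext i j
        rw [Matrix.mul_apply]
        cases i <;> cases j <;>
          simp [hM_def, hM'_def, Fintype.sum_option, Matrix.one_apply, hgd,
            ← Matrix.mul_apply, hts]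
    have hfact : z = (1 + C) * M * (1 + D) := by
      ext i j
      rw [Matrix.mul_apply]
      cases i <;> cases j <;>
        simp [Matrix.mul_apply, hC_def, hD_def, hM_def, hs_def, Fintype.sum_option,
            Matrix.one_apply, mul_add, add_mul, Finset.mul_sum, Finset.sum_mul, mul_assoc,
           hdgx, hgdx, hdg, hgd, ← hd_def]
    rw [hfact]
    exact (hCu.mul hMu).mul hDu


section MatrixOf
variable {A : Type*} [Ring A] {q : ℕ}

private def matrixOf (φ : (Fin q → A) →ₗ[Aᵐᵒᵖ] (Fin q → A)) : Matrix (Fin q) (Fin q) A :=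
  Matrix.of fun i j => φ (Pi.single j 1) i

private lemma matrixOf_mulVec (φ : (Fin q → A) →ₗ[Aᵐᵒᵖ] (Fin q → A)) (v : Fin q → A) :
    (matrixOf φ).mulVec v = φ v := by
  have hv : v = ∑ j, MulOpposite.op (v j) • (Pi.single j (1 : A) : Fin q → A) := by
    ext i
    rw [Finset.sum_apply]
    simp [Pi.single_apply, MulOpposite.smul_eq_mul_unop]
  ext i
  conv_rhs => rw [hv]
  rw [map_sum, Finset.sum_apply]
  simp [matrixOf, Matrix.mulVec, dotProduct, MulOpposite.smul_eq_mul_unop]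

private lemma matrixOf_comp (φ ψ : (Fin q → A) →ₗ[Aᵐᵒᵖ] (Fin q → A)) :
    matrixOf (φ ∘ₗ ψ) = matrixOf φ * matrixOf ψ := by
  ext i j
  rw [Matrix.mul_apply]
  show φ (ψ (Pi.single j 1)) i = _
  rw [← matrixOf_mulVec φ (ψ (Pi.single j 1))]
  simp [Matrix.mulVec, dotProduct, matrixOf]

end MatrixOf


open Finset in
private lemma quadform_one_add_conj {B : Type*} [CStarAlgebra B] [PartialOrder B]
    [StarOrderedRing B] {n : Type} [Fintype n] [DecidableEq n] (k : Matrix n n B)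
    (v : n → B) :
    ∑ i, star (v i) * v i ≤
      ∑ i, ∑ j, star (v i) * (1 + k.conjTranspose * k) i j * v j := by
  have expand : ∀ i j, star (v i) * (1 + k.conjTranspose * k) i j * v j
      = star (v i) * (if i = j then 1 else 0) * v j
        + ∑ l, star (k l i * v i) * (k l j * v j) := by
    intro i j
    rw [Matrix.add_apply, Matrix.one_apply, Matrix.mul_apply, mul_add, add_mul]
    congr 1
    rw [Finset.mul_sum, Finset.sum_mul]
    refine Finset.sum_congr rfl fun l _ => ?_
    rw [Matrix.conjTranspose_apply, star_mul]
    noncomm_ring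
  calc ∑ i, star (v i) * v i
      ≤ ∑ i, star (v i) * v i
          + ∑ l, star (∑ j, k l j * v j) * (∑ j, k l j * v j) :=
        le_add_of_nonneg_right (Finset.sum_nonneg fun l _ => star_mul_self_nonneg _)
    _ = ∑ i, ∑ j, star (v i) * (1 + k.conjTranspose * k) i j * v j := by
        simp only [expand, Finset.sum_add_distrib]
        congr 1
        · refine (Finset.sum_congr rfl fun i _ => ?_).symm
          rw [Finset.sum_eq_single i ?_ ?_]
          · simp
          · intro b _ hb; simp [Ne.symm hb]
          · intro h; exact absurd (Finset.mem_univ i) h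
        · calc ∑ l, star (∑ j, k l j * v j) * (∑ j, k l j * v j)
              = ∑ l, ∑ i, ∑ j, star (k l i * v i) * (k l j * v j) := by
                refine Finset.sum_congr rfl fun l _ => ?_
                rw [star_sum, Finset.sum_mul_sum]
            _ = ∑ i, ∑ l, ∑ j, star (k l i * v i) * (k l j * v j) := Finset.sum_comm
            _ = ∑ i, ∑ j, ∑ l, star (k l i * v i) * (k l j * v j) :=
                Finset.sum_congr rfl fun i _ => Finset.sum_comm

set_option maxHeartbeats 2000000 in
theorem stmt_1 {B : Type*} [CStarAlgebra B] (A : StarSubalgebra ℂ B)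
    -- (i): spectral invariance for matrices over `A`
    (hinv : ∀ n : ℕ, 1 ≤ n → ∀ x : Matrix (Fin n) (Fin n) A,
      IsUnit (x.map (fun a => (a : B))) → IsUnit x)
    -- (ii): a positive invertible matrix over `A` has its positive square root over `A`
    (hsqrt : ∀ n : ℕ, 1 ≤ n → ∀ x : Matrix (Fin n) (Fin n) A,
      (∃ z : Matrix (Fin n) (Fin n) B, x.map (fun a => (a : B)) = z.conjTranspose * z) →
      IsUnit (x.map (fun a => (a : B))) →
      ∃ y : Matrix (Fin n) (Fin n) A, y * y = x ∧
        ∃ w : Matrix (Fin n) (Fin n) B, y.map (fun a => (a : B)) = w.conjTranspose * w)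
    (E : Type*) [AddCommGroup E] [Module Aᵐᵒᵖ E]
    [Module.Finite Aᵐᵒᵖ E] [Module.Projective Aᵐᵒᵖ E] :
    ∃ (q : ℕ) (_ : 1 ≤ q) (p : Matrix (Fin q) (Fin q) A),
      p * p = p ∧ p.conjTranspose = p ∧
      Nonempty (E ≃ₗ[Aᵐᵒᵖ] p.rangeSubmodule) := by
  classical
  letI : PartialOrder B := CStarAlgebra.spectralOrder B
  haveI : StarOrderedRing B := CStarAlgebra.spectralOrderedRing B
  obtain ⟨n, x, hx⟩ := Module.Finite.exists_fin (R := (↥A)ᵐᵒᵖ) (M := E)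
  set q := n + 1 with hq_def
  have hq : 1 ≤ q := Nat.le_add_left 1 n
  set x' : Fin q → E := fun i => if h : (i : ℕ) < n then x ⟨i, h⟩ else 0 with hx'_def
  set π : (Fin q → ↥A) →ₗ[(↥A)ᵐᵒᵖ] E :=
    { toFun := fun v => ∑ i, MulOpposite.op (v i) • x' i
      map_add' := fun v w => by
        simp only [Pi.add_apply, MulOpposite.op_add, add_smul]
        rw [Finset.sum_add_distrib]
      map_smul' := fun c v => by
        simp only [RingHom.id_apply]
        calc ∑ i, MulOpposite.op ((c • v) i) • x' i
            = ∑ i, c • (MulOpposite.op (v i) • x' i) :=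
              Finset.sum_congr rfl fun i _ => by
                rw [Pi.smul_apply, MulOpposite.smul_eq_mul_unop, MulOpposite.op_mul,
                  MulOpposite.op_unop, mul_smul]
          _ = c • ∑ i, MulOpposite.op (v i) • x' i := (Finset.smul_sum).symm } with hπ_def
  have key : ∀ j : Fin q, π (Pi.single j 1) = x' j := by
    intro j
    show (∑ k, MulOpposite.op ((Pi.single j (1 : ↥A) : Fin q → ↥A) k) • x' k) = x' j
    rw [Finset.sum_eq_single j ?_ ?_]
    · simp
    · intro k _ hk; simp [Pi.single_apply, hk]
    · intro h; exact absurd (Finset.mem_univ j) h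
  have hπ : Function.Surjective π := by
    intro y
    have hy : y ∈ Submodule.span (↥A)ᵐᵒᵖ (Set.range x) := hx ▸ Submodule.mem_top
    have hsub : Set.range x ⊆ ↑(LinearMap.range π) := by
      rintro _ ⟨i, rfl⟩
      refine ⟨Pi.single ⟨i.1, lt_of_lt_of_le i.2 (Nat.le_succ n)⟩ 1, ?_⟩
      rw [key]
      simp [hx'_def, i.2]
    exact Submodule.span_le.mpr hsub hy
  obtain ⟨σ, hσ⟩ := Module.projective_lifting_property π LinearMap.id hπ
  have hπσ : ∀ y : E, π (σ y) = y := fun y => by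
    have := LinearMap.ext_iff.mp hσ y
    simpa using this
  set e := matrixOf (σ ∘ₗ π) with he_def
  have he : e * e = e := by
    rw [he_def, ← matrixOf_comp]
    exact congrArg matrixOf (LinearMap.ext fun v => by simp [LinearMap.comp_apply, hπσ])
  set F := e.conjTranspose with hF_def
  have hF : F * F = F := by
    rw [hF_def, ← Matrix.conjTranspose_mul, he]
  set k := F - e with hk_def
  set w := (e - F) * (F - e) with hw_def
  set zA := 1 + w with hzA_def
  have hkk : k.conjTranspose * k = w := by
    rw [hk_def, hw_def, Matrix.conjTranspose_sub, hF_def, Matrix.conjTranspose_conjTranspose]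
  have hw1 : w = e * F - e - F + F * e := by
    rw [hw_def, sub_mul, mul_sub, mul_sub, he, hF]
    abel
  have hew : e * w = e * F * e - e := by
    rw [hw1, mul_add, mul_sub, mul_sub, ← mul_assoc e e F, ← mul_assoc e F e, he]
    abel
  have hwe : w * e = e * F * e - e := by
    rw [hw1, add_mul, sub_mul, sub_mul, he, mul_assoc F e e, he]
    abel
  have hFw : F * w = F * e * F - F := by
    rw [hw1, mul_add, mul_sub, mul_sub, ← mul_assoc F e F, ← mul_assoc F F e, hF]
    abel
  have hwF : w * F = F * e * F - F := by
    rw [hw1, add_mul, sub_mul, sub_mul, mul_assoc e F F, hF, mul_assoc F e F]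
    abel
  have hez : e * zA = zA * e := by
    rw [hzA_def, mul_add, add_mul, mul_one, one_mul, hew, hwe]
  have hFz : F * zA = zA * F := by
    rw [hzA_def, mul_add, add_mul, mul_one, one_mul, hFw, hwF]
  have hzAs : zA.conjTranspose = zA := by
    rw [hzA_def, Matrix.conjTranspose_add, Matrix.conjTranspose_one, ← hkk,
      Matrix.conjTranspose_mul, Matrix.conjTranspose_conjTranspose]
  set cB : ↥A →+* B := A.subtype.toAlgHom.toRingHom with hcB_def
  have hmap : ∀ M : Matrix (Fin q) (Fin q) ↥A,
      M.map (fun a : ↥A => (a : B)) = cB.mapMatrix M := fun M => rfl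
  have hconj : cB.mapMatrix k.conjTranspose = (cB.mapMatrix k).conjTranspose := by
    rw [← hmap, ← hmap]
    exact Matrix.conjTranspose_map (fun a : ↥A => (a : B)) (fun a => rfl)
  have hzB : zA.map (fun a : ↥A => (a : B))
      = 1 + (cB.mapMatrix k).conjTranspose * cB.mapMatrix k := by
    rw [hmap, hzA_def, ← hkk, map_add, map_one, map_mul, hconj]
  have hzBu : IsUnit (zA.map (fun a : ↥A => (a : B))) := by
    rw [hzB]
    exact isUnit_of_quadform (Fin q) _ (quadform_one_add_conj (cB.mapMatrix k))
  have hzAu : IsUnit zA := hinv q hq zA hzBu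
  obtain ⟨U, hU⟩ := hzAu
  set ζ := (U⁻¹ : (Matrix (Fin q) (Fin q) ↥A)ˣ).val with hζ_def
  have hz1 : zA * ζ = 1 := by rw [← hU]; exact U.mul_inv
  have hz2 : ζ * zA = 1 := by rw [← hU]; exact U.inv_mul
  have comm_inv : ∀ X : Matrix (Fin q) (Fin q) ↥A, X * zA = zA * X → X * ζ = ζ * X := by
    intro X hX
    calc X * ζ = (ζ * zA) * (X * ζ) := by rw [hz2, one_mul]
      _ = ζ * (zA * X * ζ) := by rw [mul_assoc, ← mul_assoc zA X ζ]
      _ = ζ * (X * (zA * ζ)) := by rw [← hX, mul_assoc]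
      _ = ζ * X := by rw [hz1, mul_one]
  have hζs : ζ.conjTranspose = ζ := by
    have h1 : ζ.conjTranspose * zA = 1 := by
      conv_lhs => rw [← hzAs]
      rw [← Matrix.conjTranspose_mul, hz1, Matrix.conjTranspose_one]
    calc ζ.conjTranspose = ζ.conjTranspose * (zA * ζ) := by rw [hz1, mul_one]
      _ = (ζ.conjTranspose * zA) * ζ := by rw [mul_assoc]
      _ = ζ := by rw [h1, one_mul]
  set p := e * F * ζ with hp_def
  have heζ := comm_inv e hez
  have hFζ := comm_inv F hFz
  have hpe : p * e = e := by
    have h1 : e * F * e = zA * e := by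
      rw [hzA_def, add_mul, one_mul, hwe]; abel
    calc p * e = e * F * (ζ * e) := by rw [hp_def, mul_assoc]
      _ = e * F * (e * ζ) := by rw [← heζ]
      _ = e * F * e * ζ := by rw [← mul_assoc]
      _ = zA * e * ζ := by rw [h1]
      _ = zA * ζ * e := by rw [mul_assoc, heζ, ← mul_assoc]
      _ = e := by rw [hz1, one_mul]
  have hpp : p * p = p := by
    calc p * p = p * (e * F * ζ) := by rw [hp_def]
      _ = p * e * (F * ζ) := by rw [mul_assoc e F ζ, ← mul_assoc p e (F * ζ)]
      _ = e * (F * ζ) := by rw [hpe]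
      _ = p := by rw [hp_def, ← mul_assoc]
  have hcomm_eF : e * F * ζ = ζ * (e * F) := by
    rw [mul_assoc, hFζ, ← mul_assoc, heζ, mul_assoc]
  have hps : p.conjTranspose = p := by
    rw [hp_def, Matrix.conjTranspose_mul, Matrix.conjTranspose_mul, hζs, hF_def,
      Matrix.conjTranspose_conjTranspose, ← hF_def]
    exact hcomm_eF.symm
  have hmv : ∀ v, e.mulVec v = σ (π v) := fun v => by
    rw [he_def, matrixOf_mulVec]; rfl
  have hrange : Set.range p.mulVec = Set.range ⇑σ := by
    have h1 : Set.range e.mulVec = Set.range ⇑σ := by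
      apply Set.eq_of_subset_of_subset
      · rintro _ ⟨v, rfl⟩; exact ⟨π v, (hmv v).symm⟩
      · rintro _ ⟨y, rfl⟩
        obtain ⟨v, hv⟩ := hπ y
        exact ⟨v, by rw [hmv, hv]⟩
    rw [← h1]
    apply Set.eq_of_subset_of_subset
    · rintro _ ⟨v, rfl⟩
      refine ⟨(F * ζ).mulVec v, ?_⟩
      rw [Matrix.mulVec_mulVec, ← mul_assoc, ← hp_def]
    · rintro _ ⟨v, rfl⟩
      refine ⟨e.mulVec v, ?_⟩
      rw [Matrix.mulVec_mulVec, hpe]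
  have hσinj : Function.Injective ⇑σ := Function.LeftInverse.injective hπσ
  have hsub_eq : LinearMap.range σ = p.rangeSubmodule := by
    apply SetLike.ext'
    show (Set.range ⇑σ) = Set.range p.mulVec
    exact hrange.symm
  exact ⟨q, hq, p, hpp, hps,
    ⟨(LinearEquiv.ofInjective σ hσinj).trans (LinearEquiv.ofEq _ _ hsub_eq)⟩⟩
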